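/- Let G = (N, E) be a simple graph on S vertices, and define travel times t(i,j) = 4 if {i,j} ∈ E, t(i,j) = 16 otherwise, and t(0,s) = 8 for the base station 0 to every vertex s. Then G has a Hamiltonian path if and only if there exists a tour starting and ending at 0 that visits every vertex of N exactly once with total travel time at most 4S + 12. -/

import Mathlib

private lemma sum_cost_of_chain {α : Type*} {R : α → α → Prop} [DecidableRel R]
    (l : List α) (h : l.Chain' R) :
    ((l.zip l.tail).map (fun p => if R p.1 p.2 then (4 : ℕ) else 16)).sum
      = 4 * (l.length - 1) := by
  induction l with
  | nil => simp
  | cons a t ih =>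
    cases t with
    | nil => simp
    | cons b t =>
      simp only [List.Chain', List.isChain_cons_cons] at h
      have ih' := ih h.2
      simp only [List.tail_cons, List.zip_cons_cons, List.map_cons, List.sum_cons,
        if_pos h.1, List.length_cons] at ih' ⊢
      omega

private lemma sum_cost_lower {α : Type*} {R : α → α → Prop} [DecidableRel R]
    (l : List α) :
    4 * (l.length - 1) ≤
      ((l.zip l.tail).map (fun p => if R p.1 p.2 then (4 : ℕ) else 16)).sum := by
  induction l with
  | nil => simp
  | cons a t ih =>
    cases t with
    | nil => simp
    | cons b t =>
      simp only [List.tail_cons, List.zip_cons_cons, List.map_cons, List.sum_cons,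
        List.length_cons] at *
      have : (4 : ℕ) ≤ if R a b then 4 else 16 := by split <;> omega
      omega

private lemma chain_of_sum_cost {α : Type*} {R : α → α → Prop} [DecidableRel R]
    (l : List α)
    (h : ((l.zip l.tail).map (fun p => if R p.1 p.2 then (4 : ℕ) else 16)).sum
      ≤ 4 * (l.length - 1)) : l.Chain' R := by
  induction l with
  | nil => simp [List.Chain']
  | cons a t ih =>
    cases t with
    | nil => simp [List.Chain']
    | cons b t =>
      simp only [List.Chain', List.isChain_cons_cons]
      simp only [List.tail_cons, List.zip_cons_cons, List.map_cons, List.sum_cons,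
        List.length_cons] at h
      have low := sum_cost_lower (R := R) (b :: t)
      simp only [List.tail_cons, List.length_cons] at low ih ⊢
      have hab : R a b := by
        by_contra hn
        rw [if_neg hn] at h
        omega
      rw [if_pos hab] at h
      exact ⟨hab, ih (by omega)⟩

/-- Core equivalence of the NP-hardness reduction (Theorem 1): with travel times
`4` on edges, `16` on non-edges, and `8` between the base station and any node,
`G` has a Hamiltonian path iff there is a tour from the base station visiting every
vertex exactly once with total travel time at most `4S + 12`. -/
theorem stmt_7 (S : ℕ) (hS : 1 ≤ S) (G : SimpleGraph (Fin S)) [DecidableRel G.Adj] :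
    (∃ l : List (Fin S), l.Nodup ∧ (∀ v, v ∈ l) ∧ l.Chain' G.Adj) ↔
    (∃ l : List (Fin S), l.Nodup ∧ (∀ v, v ∈ l) ∧
      8 + ((l.zip l.tail).map (fun p => if G.Adj p.1 p.2 then (4 : ℕ) else 16)).sum + 8
        ≤ 4 * S + 12) := by
  have hlen : ∀ l : List (Fin S), l.Nodup → (∀ v, v ∈ l) → l.length = S := by
    intro l hnd hmem
    have : l.toFinset = Finset.univ := Finset.eq_univ_iff_forall.mpr (by simp [hmem])
    have h2 := List.toFinset_card_of_nodup hnd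
    rw [this] at h2
    simpa using h2.symm
  constructor
  · rintro ⟨l, hnd, hmem, hch⟩
    refine ⟨l, hnd, hmem, ?_⟩
    rw [sum_cost_of_chain l hch, hlen l hnd hmem]
    omega
  · rintro ⟨l, hnd, hmem, hle⟩
    refine ⟨l, hnd, hmem, chain_of_sum_cost l ?_⟩
    rw [hlen l hnd hmem]
    omega
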